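/- With the constants of the class I₁₃ solution — a ≠ 0, k ∉ {0,-1,1,-2,-1/2}, β = 1+k+k², φ₁ = -√2 k(k+1)a, φ₂ = -√2 a(k+1), φ₃ = √2 k a, α₁(τ) = b e^{2aβτ}, α₂ = kα₁, α₃ = -(1+k)α₁, and (dτ)² = b e^{2aβτ}/(a² k(k+1)) — the three scalar equations ((φⱼ + φₖ)' - √2 φⱼφₖ)·(dτ)² = 2√2 αᵢ hold for every cyclic permutation (i,j,k) of (1,2,3). -/

import Mathlib

theorem stmt_3 (a k b : ℝ) (ha : a ≠ 0) (hb : b ≠ 0)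
    (hk0 : k ≠ 0) (hkm1 : k ≠ -1) (hk1 : k ≠ 1) (hkm2 : k ≠ -2) (hkh : k ≠ -(1/2))
    (β : ℝ) (hβ : β = 1 + k + k^2)
    (φ₁ φ₂ φ₃ : ℝ)
    (hφ₁ : φ₁ = -Real.sqrt 2 * (k * (k + 1)) * a)
    (hφ₂ : φ₂ = -Real.sqrt 2 * a * (k + 1))
    (hφ₃ : φ₃ = Real.sqrt 2 * k * a)
    (α₁ α₂ α₃ D : ℝ → ℝ)
    (hα₁ : ∀ τ, α₁ τ = b * Real.exp (2 * a * β * τ))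
    (hα₂ : ∀ τ, α₂ τ = k * α₁ τ)
    (hα₃ : ∀ τ, α₃ τ = -(1 + k) * α₁ τ)
    (hD : ∀ τ, D τ = b * Real.exp (2 * a * β * τ) / (a^2 * (k * (k + 1)))) :
    ∀ τ : ℝ,
      (deriv (fun _ : ℝ => φ₂ + φ₃) τ - Real.sqrt 2 * (φ₂ * φ₃)) * D τ
          = 2 * Real.sqrt 2 * α₁ τ ∧
      (deriv (fun _ : ℝ => φ₃ + φ₁) τ - Real.sqrt 2 * (φ₃ * φ₁)) * D τ
          = 2 * Real.sqrt 2 * α₂ τ ∧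
      (deriv (fun _ : ℝ => φ₁ + φ₂) τ - Real.sqrt 2 * (φ₁ * φ₂)) * D τ
          = 2 * Real.sqrt 2 * α₃ τ := by
  intro τ
  have hs : Real.sqrt 2 ^ 2 = 2 := Real.sq_sqrt (by norm_num)
  have hk1 : k + 1 ≠ 0 := by intro h; apply hkm1; linarith
  have hden : a^2 * (k * (k + 1)) ≠ 0 := by positivity <;> skip
  refine ⟨?_, ?_, ?_⟩ <;>
    simp only [deriv_const, hα₁, hα₂, hα₃, hD, hφ₁, hφ₂, hφ₃] <;>
    field_simp
  · linear_combination (Real.sqrt 2 * (a^2*k + a^2*k^2)) * hs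
  · linear_combination (Real.sqrt 2 * (k^2 + k^3) * a^2) * hs
  · linear_combination (-(Real.sqrt 2) * (k + 2*k^2 + k^3) * a^2) * hs
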